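/- Let M(𝕋) denote the set of Borel probability measures on the unit circle 𝕋 ⊆ ℂ. For θ ∈ ℝ let ρ̂_θ(μ) denote the pushforward of μ ∈ M(𝕋) under the rotation z ↦ e^{iθ}z, and for each integer k ≥ 1 define R̂_k(μ) := (1/k) ∑_{j=0}^{k−1} ρ̂_{2πj/k}(μ). Then, with closures taken in the total variation norm, ⋂_{n=1}^∞ closure( conv{ R̂_k(μ) : k ≥ n, μ ∈ M(𝕋) } ) = {m}, where m is the normalised Haar (Lebesgue) measure on 𝕋 and conv denotes the convex hull inside M(𝕋). -/

import Mathlib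

open MeasureTheory
open scoped ENNReal

namespace Stmt19

/-- The unit circle `𝕋 ⊆ ℂ`. -/
abbrev Torus : Type := {z : ℂ // ‖z‖ = 1}

/-- Rotation of the circle by angle `θ`: `z ↦ e^{iθ} z`. -/
noncomputable def rot (θ : ℝ) (z : Torus) : Torus :=
  ⟨Complex.exp (θ * Complex.I) * z.1, by
    have h1 : ‖Complex.exp ((θ : ℂ) * Complex.I)‖ = 1 := by
      exact Complex.norm_exp_ofReal_mul_I θ
    rw [norm_mul, h1, z.2, one_mul]⟩

/-- The Markov pushforward `ρ̂_θ`: the image of `μ` under rotation by `θ`. -/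
noncomputable def rhat (θ : ℝ) (μ : Measure Torus) : Measure Torus :=
  Measure.map (rot θ) μ

/-- `R̂_k = (1/k) ∑_{j=0}^{k-1} ρ̂_{2πj/k}`. -/
noncomputable def Rhat (k : ℕ) (μ : Measure Torus) : Measure Torus :=
  (k : ℝ≥0∞)⁻¹ • ∑ j ∈ Finset.range k, rhat (2 * Real.pi * j / k) μ

/-- The total variation distance between (probability) measures:
`sup_A (|μ A - ν A|)`, which induces the total variation norm topology. -/
noncomputable def tvDist (μ ν : Measure Torus) : ℝ≥0∞ :=
  ⨆ (A : Set Torus) (_ : MeasurableSet A), ((μ A - ν A) + (ν A - μ A))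

/-- Closure with respect to the total variation norm. -/
def tvClosure (S : Set (Measure Torus)) : Set (Measure Torus) :=
  {μ | ∀ ε : ℝ≥0∞, 0 < ε → ∃ ν ∈ S, tvDist μ ν < ε}

/-- The convex hull (inside the probability measures): all finite convex
combinations of elements of `S`. -/
def convComb (S : Set (Measure Torus)) : Set (Measure Torus) :=
  {μ | ∃ (n : ℕ) (w : Fin n → ℝ≥0∞) (f : Fin n → Measure Torus),
    (∑ i, w i) = 1 ∧ (∀ i, f i ∈ S) ∧ μ = ∑ i, w i • f i}

instance : CompactSpace Torus := by
  have h : IsCompact {z : ℂ | ‖z‖ = 1} := by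
    have h2 : {z : ℂ | ‖z‖ = 1} = Metric.sphere (0:ℂ) 1 := by
      ext z; simp [mem_sphere_zero_iff_norm]
    rw [h2]; exact isCompact_sphere (0:ℂ) 1
  exact isCompact_iff_compactSpace.mp h
instance : BorelSpace Torus := Subtype.borelSpace {z : ℂ | ‖z‖ = 1}
lemma continuous_rot (θ : ℝ) : Continuous (rot θ) :=
  Continuous.subtype_mk (continuous_const.mul continuous_subtype_val) _
lemma measurable_rot (θ : ℝ) : Measurable (rot θ) := (continuous_rot θ).measurable
lemma chi_cont (l : ℤ) : Continuous (fun z : Torus => z.1 ^ l) := by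
  apply Continuous.zpow₀ continuous_subtype_val
  intro z; left; intro h
  have := z.2; rw [h] at this; simp at this
noncomputable def chi (l : ℤ) : C(Torus, ℂ) := ⟨fun z => z.1 ^ l, chi_cont l⟩
lemma norm_chi (l : ℤ) (z : Torus) : ‖chi l z‖ = 1 := by
  simp [chi, norm_zpow, z.2]
lemma integrable_of_continuous {E : Type*} [NormedAddCommGroup E] {f : Torus → E}
    (hf : Continuous f) (μ : Measure Torus) [IsFiniteMeasure μ] : Integrable f μ :=
  hf.integrable_of_hasCompactSupport (HasCompactSupport.of_compactSpace f)

-- new material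
instance isProb_rhat (θ : ℝ) (μ : Measure Torus) [IsProbabilityMeasure μ] :
    IsProbabilityMeasure (rhat θ μ) :=
  Measure.isProbabilityMeasure_map (measurable_rot θ).aemeasurable

lemma isProb_Rhat {k : ℕ} (hk : 1 ≤ k) (μ : Measure Torus) [IsProbabilityMeasure μ] :
    IsProbabilityMeasure (Rhat k μ) := by
  constructor
  have hne : (k : ℝ≥0∞) ≠ 0 := by exact_mod_cast (by omega : k ≠ 0)
  rw [Rhat, Measure.smul_apply, Measure.finset_sum_apply]
  have : ∀ j ∈ Finset.range k, rhat (2 * Real.pi * j / k) μ Set.univ = 1 := by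
    intro j _
    exact measure_univ
  rw [Finset.sum_congr rfl this]
  simp only [Finset.sum_const, Finset.card_range, nsmul_eq_mul, mul_one, smul_eq_mul]
  exact ENNReal.inv_mul_cancel hne (by simp)

lemma chi_rot (l : ℤ) (θ : ℝ) (z : Torus) :
    chi l (rot θ z) = Complex.exp (l * θ * Complex.I) * chi l z := by
  show (Complex.exp (θ * Complex.I) * z.1) ^ l
      = Complex.exp (l * θ * Complex.I) * z.1 ^ l
  rw [mul_zpow, ← Complex.exp_int_mul, mul_assoc]

lemma integral_chi_map (l : ℤ) (θ : ℝ) (μ : Measure Torus) :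
    ∫ z, chi l z ∂(Measure.map (rot θ) μ)
      = Complex.exp (l * θ * Complex.I) * ∫ z, chi l z ∂μ := by
  rw [integral_map (measurable_rot θ).aemeasurable (chi l).continuous.aestronglyMeasurable]
  simp_rw [chi_rot l θ]
  rw [integral_const_mul]

lemma geom_sum_zero {l : ℤ} (hl : l ≠ 0) {k : ℕ} (hk : l.natAbs < k) :
    ∑ j ∈ Finset.range k, Complex.exp (l * (2 * Real.pi * j / k) * Complex.I) = 0 := by
  have hk0 : (k : ℂ) ≠ 0 := by
    exact_mod_cast Nat.cast_ne_zero.mpr (by omega)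
  set ζ : ℂ := Complex.exp (2 * Real.pi * l / k * Complex.I) with hζ
  have hterm : ∀ j ∈ Finset.range k,
      Complex.exp (l * (2 * Real.pi * j / k) * Complex.I) = ζ ^ j := by
    intro j _
    rw [hζ, ← Complex.exp_nat_mul]
    congr 1
    ring
  rw [Finset.sum_congr rfl hterm]
  have hζk : ζ ^ k = 1 := by
    rw [hζ, ← Complex.exp_nat_mul]
    have : (k : ℂ) * (2 * Real.pi * l / k * Complex.I) = l * (2 * Real.pi * Complex.I) := by
      field_simp
    rw [this]
    exact Complex.exp_int_mul_two_pi_mul_I l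
  have hζ1 : ζ ≠ 1 := by
    intro h
    rw [hζ, Complex.exp_eq_one_iff] at h
    obtain ⟨n, hn⟩ := h
    have h2 : (2 * (Real.pi:ℂ) * l / k) * Complex.I
        = ((n:ℂ) * (2 * Real.pi)) * Complex.I := by rw [hn]; ring
    have h3 := mul_right_cancel₀ Complex.I_ne_zero h2
    have h2π : (2*(Real.pi:ℂ)) ≠ 0 := by
      simp [Complex.ofReal_ne_zero, Real.pi_ne_zero]
    have h5 : (l:ℂ) = n*k := by
      apply mul_left_cancel₀ h2π
      field_simp at h3
      linear_combination (2 * (Real.pi:ℂ)) * h3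
    have h6 : l = n * k := by exact_mod_cast h5
    have hn0 : n ≠ 0 := by rintro rfl; simp at h6; exact hl h6
    have : l.natAbs = n.natAbs * k := by rw [h6, Int.natAbs_mul, Int.natAbs_natCast]
    have : k ≤ l.natAbs := by
      rw [this]
      calc k = 1 * k := (one_mul k).symm
      _ ≤ n.natAbs * k := Nat.mul_le_mul_right k (by omega)
    omega
  have := geom_sum_eq hζ1 k
  rw [this, hζk, sub_self, zero_div]

lemma integral_chi_Rhat {l : ℤ} (hl : l ≠ 0) {k : ℕ} (hk : l.natAbs < k)
    (μ : Measure Torus) [IsProbabilityMeasure μ] :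
    ∫ z, chi l z ∂(Rhat k μ) = 0 := by
  rw [Rhat, integral_smul_measure, integral_finset_sum_measure (fun j _ =>
    integrable_of_continuous (chi l).continuous _)]
  have : ∀ j ∈ Finset.range k, ∫ z, chi l z ∂(rhat (2 * Real.pi * j / k) μ)
      = Complex.exp (l * (2 * Real.pi * j / k) * Complex.I) * ∫ z, chi l z ∂μ := by
    intro j _
    rw [rhat, integral_chi_map]
    norm_cast
  rw [Finset.sum_congr rfl this, ← Finset.sum_mul, geom_sum_zero hl hk, zero_mul, smul_zero]

lemma convComb_facts {n : ℕ} (hn : 1 ≤ n) {ν : Measure Torus}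
    (hν : ν ∈ convComb {x : Measure Torus | ∃ k : ℕ, n ≤ k ∧
      ∃ μ : Measure Torus, IsProbabilityMeasure μ ∧ x = Rhat k μ}) :
    IsProbabilityMeasure ν ∧ ∀ l : ℤ, l ≠ 0 → l.natAbs < n → ∫ z, chi l z ∂ν = 0 := by
  obtain ⟨m, w, f, hw, hf, rfl⟩ := hν
  have hfp : ∀ i, IsProbabilityMeasure (f i) := by
    intro i
    obtain ⟨k, hk, μ, hμ, hx⟩ := hf i
    rw [hx]
    exact isProb_Rhat (le_trans hn hk) μ
  have hwle : ∀ i, w i ≤ 1 := fun i =>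
    hw ▸ Finset.single_le_sum (f := w) (fun _ _ => zero_le) (Finset.mem_univ i)
  have hint : ∀ i : Fin m, Integrable (fun z => chi (0:ℤ) z) (w i • f i) → True := fun _ _ => trivial
  refine ⟨⟨?_⟩, ?_⟩
  · rw [Measure.finset_sum_apply]
    have : ∀ i ∈ Finset.univ, (w i • f i) Set.univ = w i := by
      intro i _
      haveI := hfp i
      rw [Measure.smul_apply, measure_univ, smul_eq_mul, mul_one]
    rw [Finset.sum_congr rfl this, hw]
  · intro l hl hln
    have hI : ∀ i : Fin m, Integrable (fun z => chi l z) (w i • f i) := by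
      intro i
      haveI := hfp i
      exact (integrable_of_continuous (chi l).continuous (f i)).smul_measure
        (lt_of_le_of_lt (hwle i) (by norm_num)).ne
    rw [integral_finset_sum_measure (fun i _ => hI i)]
    apply Finset.sum_eq_zero
    intro i _
    obtain ⟨k, hk, μ, hμ, hx⟩ := hf i
    haveI := hμ
    rw [integral_smul_measure, hx, integral_chi_Rhat hl (lt_of_lt_of_le hln hk), smul_zero]

lemma measure_le_of_tvDist {μ ν : Measure Torus} {ε : ℝ≥0∞} (h : tvDist μ ν < ε)
    {A : Set Torus} (hA : MeasurableSet A) : μ A ≤ ν A + ε ∧ ν A ≤ μ A + ε := by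
  have hle : (μ A - ν A) + (ν A - μ A) ≤ tvDist μ ν := by
    apply le_iSup_of_le A
    exact le_iSup_of_le hA le_rfl
  have h1 : μ A - ν A ≤ ε := le_trans (le_trans le_self_add hle) h.le
  have h2 : ν A - μ A ≤ ε := le_trans (le_trans le_add_self hle) h.le
  exact ⟨by rw [add_comm]; exact tsub_le_iff_right.mp h1,
    by rw [add_comm]; exact tsub_le_iff_right.mp h2⟩

lemma integral_le_of_meas_le {μ ν : Measure Torus} [IsProbabilityMeasure μ]
    [IsProbabilityMeasure ν] {ε : ℝ≥0∞} (hε : ε ≠ ∞)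
    (h : ∀ A : Set Torus, MeasurableSet A → μ A ≤ ν A + ε)
    {g : Torus → ℝ} (hg : Continuous g) {M : ℝ} (hM : 0 ≤ M)
    (h0 : ∀ x, 0 ≤ g x) (h1 : ∀ x, g x ≤ M) :
    ∫ x, g x ∂μ ≤ ∫ x, g x ∂ν + M * ε.toReal := by
  haveI : IsFiniteMeasure (volume.restrict (Set.Ioc (0:ℝ) M)) :=
    ⟨by rw [Measure.restrict_apply_univ, Real.volume_Ioc]; exact ENNReal.ofReal_lt_top⟩
  have hintμ : Integrable g μ := integrable_of_continuous hg μ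
  have hintν : Integrable g ν := integrable_of_continuous hg ν
  rw [hintμ.integral_eq_integral_Ioc_meas_le (ae_of_all _ h0) (ae_of_all _ h1),
    hintν.integral_eq_integral_Ioc_meas_le (ae_of_all _ h0) (ae_of_all _ h1)]
  have meas : ∀ ρ : Measure Torus,
      Measurable (fun t : ℝ => (ρ {a | t ≤ g a}).toReal) := by
    intro ρ
    apply Measurable.ennreal_toReal
    apply Antitone.measurable
    intro s t hst
    exact measure_mono (fun a ha => le_trans hst ha)
  have intg : ∀ ρ : Measure Torus, IsProbabilityMeasure ρ →
      Integrable (fun t : ℝ => (ρ {a | t ≤ g a}).toReal)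
        (volume.restrict (Set.Ioc (0:ℝ) M)) := by
    intro ρ hρ
    refine Integrable.mono' (integrable_const 1) (meas ρ).aestronglyMeasurable ?_
    apply ae_of_all
    intro t
    rw [Real.norm_eq_abs, abs_of_nonneg ENNReal.toReal_nonneg]
    exact ENNReal.toReal_le_of_le_ofReal zero_le_one (by simpa using prob_le_one)
  calc ∫ t in Set.Ioc (0:ℝ) M, (μ {a | t ≤ g a}).toReal
      ≤ ∫ t in Set.Ioc (0:ℝ) M, ((ν {a | t ≤ g a}).toReal + ε.toReal) := by
        apply integral_mono (intg μ inferInstance)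
          ((intg ν inferInstance).add (integrable_const _))
        intro t
        have hAm : MeasurableSet {a : Torus | t ≤ g a} :=
          (hg.measurable measurableSet_Ici : MeasurableSet (g ⁻¹' Set.Ici t))
        have := h _ hAm
        calc (μ {a | t ≤ g a}).toReal ≤ ((ν {a | t ≤ g a}) + ε).toReal := by
              apply ENNReal.toReal_mono _ this
              exact ENNReal.add_ne_top.mpr ⟨(measure_lt_top ν _).ne, hε⟩
          _ = (ν {a | t ≤ g a}).toReal + ε.toReal :=
              ENNReal.toReal_add (measure_lt_top ν _).ne hε
    _ = (∫ t in Set.Ioc (0:ℝ) M, (ν {a | t ≤ g a}).toReal) + M * ε.toReal := by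
        rw [integral_add (intg ν inferInstance) (integrable_const _), integral_const,
          measureReal_def, Measure.restrict_apply_univ, Real.volume_Ioc, smul_eq_mul,
          ENNReal.toReal_ofReal (by linarith : (0:ℝ) ≤ M - 0)]
        ring

lemma abs_integral_real_sub_le {μ ν : Measure Torus} [IsProbabilityMeasure μ]
    [IsProbabilityMeasure ν] {ε : ℝ≥0∞} (hε : ε ≠ ∞)
    (h : ∀ A : Set Torus, MeasurableSet A → μ A ≤ ν A + ε ∧ ν A ≤ μ A + ε)
    {φ : Torus → ℝ} (hφ : Continuous φ) (hb : ∀ x, |φ x| ≤ 1) :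
    |(∫ x, φ x ∂μ) - ∫ x, φ x ∂ν| ≤ 2 * ε.toReal := by
  have h0 : ∀ x, 0 ≤ φ x + 1 := fun x => by have := abs_le.mp (hb x); linarith
  have h1 : ∀ x, φ x + 1 ≤ 2 := fun x => by have := abs_le.mp (hb x); linarith
  have hg : Continuous (fun x => φ x + 1) := hφ.add continuous_const
  have e1 := integral_le_of_meas_le hε (fun A hA => (h A hA).1) hg (by norm_num) h0 h1
  have e2 := integral_le_of_meas_le hε (fun A hA => (h A hA).2) hg (by norm_num) h0 h1
  have iμ : ∫ x, (φ x + 1) ∂μ = (∫ x, φ x ∂μ) + 1 := by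
    rw [integral_add (integrable_of_continuous hφ μ) (integrable_const _), integral_const]
    simp
  have iν : ∫ x, (φ x + 1) ∂ν = (∫ x, φ x ∂ν) + 1 := by
    rw [integral_add (integrable_of_continuous hφ ν) (integrable_const _), integral_const]
    simp
  rw [iμ, iν] at e1 e2
  rw [abs_le]
  constructor <;> linarith

lemma norm_integral_chi_sub_le {μ ν : Measure Torus} [IsProbabilityMeasure μ]
    [IsProbabilityMeasure ν] {ε : ℝ≥0∞} (hε : ε ≠ ∞)
    (h : ∀ A : Set Torus, MeasurableSet A → μ A ≤ ν A + ε ∧ ν A ≤ μ A + ε) (l : ℤ) :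
    ‖(∫ z, chi l z ∂μ) - ∫ z, chi l z ∂ν‖ ≤ 4 * ε.toReal := by
  have hre : ∀ (ρ : Measure Torus) [IsProbabilityMeasure ρ],
      ∫ x, (chi l x).re ∂ρ = (∫ x, chi l x ∂ρ).re := by
    intro ρ _
    have := integral_re (integrable_of_continuous (chi l).continuous ρ)
    simpa using this
  have him : ∀ (ρ : Measure Torus) [IsProbabilityMeasure ρ],
      ∫ x, (chi l x).im ∂ρ = (∫ x, chi l x ∂ρ).im := by
    intro ρ _
    have := integral_im (integrable_of_continuous (chi l).continuous ρ)
    simpa using this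
  have hbre : ∀ x : Torus, |(chi l x).re| ≤ 1 := fun x => by
    have := Complex.abs_re_le_norm (chi l x)
    rw [norm_chi] at this
    exact this
  have hbim : ∀ x : Torus, |(chi l x).im| ≤ 1 := fun x => by
    have := Complex.abs_im_le_norm (chi l x)
    rw [norm_chi] at this
    exact this
  have hcre : Continuous (fun x : Torus => (chi l x).re) :=
    Complex.continuous_re.comp (chi l).continuous
  have hcim : Continuous (fun x : Torus => (chi l x).im) :=
    Complex.continuous_im.comp (chi l).continuous
  have e1 := abs_integral_real_sub_le hε h hcre hbre
  have e2 := abs_integral_real_sub_le hε h hcim hbim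
  rw [hre μ, hre ν] at e1
  rw [him μ, him ν] at e2
  calc ‖(∫ z, chi l z ∂μ) - ∫ z, chi l z ∂ν‖
      ≤ |((∫ z, chi l z ∂μ) - ∫ z, chi l z ∂ν).re|
        + |((∫ z, chi l z ∂μ) - ∫ z, chi l z ∂ν).im| := by
        exact Complex.norm_le_abs_re_add_abs_im _
    _ ≤ 4 * ε.toReal := by
        rw [Complex.sub_re, Complex.sub_im]
        linarith

lemma torus_ne_zero (z : Torus) : z.1 ≠ 0 := by
  intro h
  have := z.2
  rw [h] at this
  simp at this

lemma conj_torus (z : Torus) : (starRingEnd ℂ) z.1 = z.1⁻¹ := by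
  apply eq_inv_of_mul_eq_one_right
  rw [Complex.mul_conj]
  have : ‖z.1‖ = 1 := z.2
  rw [Complex.normSq_eq_norm_sq, this]
  norm_num

lemma chi_mul (a b : ℤ) : chi a * chi b = chi (a + b) := by
  ext z
  show z.1 ^ a * z.1 ^ b = z.1 ^ (a + b)
  rw [zpow_add₀ (torus_ne_zero z)]

lemma chi_zero_eq : chi 0 = 1 := by
  ext z
  show z.1 ^ (0:ℤ) = 1
  simp

lemma star_chi (l : ℤ) : star (chi l) = chi (-l) := by
  ext z
  show star ((z.1) ^ l) = z.1 ^ (-l)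
  rw [Complex.star_def, map_zpow₀, conj_torus, inv_zpow, ← zpow_neg]

noncomputable def W : Submodule ℂ C(Torus, ℂ) := Submodule.span ℂ (Set.range chi)

lemma mul_mem_W {x y : C(Torus, ℂ)} (hx : x ∈ W) (hy : y ∈ W) : x * y ∈ W := by
  have h := Submodule.mul_mem_mul hx hy
  rw [W, Submodule.span_mul_span] at h
  refine Submodule.span_le.mpr ?_ h
  rintro f hf
  rw [Set.mem_mul] at hf
  obtain ⟨u, ⟨a, rfl⟩, v, ⟨b, rfl⟩, rfl⟩ := hf
  exact Submodule.subset_span ⟨a + b, (chi_mul a b).symm⟩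

lemma star_mem_W {x : C(Torus, ℂ)} (hx : x ∈ W) : star x ∈ W := by
  induction hx using Submodule.span_induction with
  | mem f hf =>
      obtain ⟨l, rfl⟩ := hf
      rw [star_chi]
      exact Submodule.subset_span ⟨-l, rfl⟩
  | zero => rw [star_zero]; exact Submodule.zero_mem W
  | add f g _ _ hf hg => rw [star_add]; exact Submodule.add_mem W hf hg
  | smul c f _ hf => rw [star_smul]; exact Submodule.smul_mem W _ hf

lemma W_dense {f : C(Torus, ℂ)} : f ∈ closure (W : Set C(Torus, ℂ)) := by
  set A : StarSubalgebra ℂ C(Torus, ℂ) := StarAlgebra.adjoin ℂ {chi 1} with hA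
  have hsep : A.SeparatesPoints := by
    intro x y hxy
    refine ⟨chi 1, ⟨chi 1, ?_, rfl⟩, ?_⟩
    · exact StarAlgebra.subset_adjoin ℂ _ rfl
    · show x.1 ^ (1:ℤ) ≠ y.1 ^ (1:ℤ)
      simpa using fun h => hxy (Subtype.ext h)
  have htop := ContinuousMap.starSubalgebra_topologicalClosure_eq_top_of_separatesPoints A hsep
  have hf : f ∈ A.topologicalClosure := htop ▸ trivial
  have hAW : (A : Set C(Torus, ℂ)) ⊆ (W : Set C(Torus, ℂ)) := by
    intro x hx
    induction hx using StarAlgebra.adjoin_induction with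
    | mem g hg =>
        rw [Set.mem_singleton_iff] at hg
        rw [hg]
        exact Submodule.subset_span ⟨1, rfl⟩
    | algebraMap r =>
        rw [Algebra.algebraMap_eq_smul_one, ← chi_zero_eq]
        exact Submodule.smul_mem W _ (Submodule.subset_span ⟨0, rfl⟩)
    | add f g _ _ hf hg => exact Submodule.add_mem W hf hg
    | mul f g _ _ hf hg => exact mul_mem_W hf hg
    | star f _ hf => exact star_mem_W hf
  have : f ∈ closure (A : Set C(Torus, ℂ)) := by
    rw [← StarSubalgebra.topologicalClosure_coe]
    exact hf
  exact closure_mono hAW this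

lemma continuous_integral_CM (ρ : Measure Torus) [IsProbabilityMeasure ρ] :
    Continuous (fun f : C(Torus, ℂ) => ∫ x, f x ∂ρ) := by
  refine (LipschitzWith.of_dist_le_mul (K := 1) ?_).continuous
  intro f g
  rw [dist_eq_norm, ← integral_sub (integrable_of_continuous f.continuous ρ)
    (integrable_of_continuous g.continuous ρ)]
  have hb : ∀ x : Torus, ‖f x - g x‖ ≤ dist f g := by
    intro x
    rw [← dist_eq_norm]
    exact ContinuousMap.dist_apply_le_dist x
  calc ‖∫ x, (f x - g x) ∂ρ‖ ≤ dist f g * (ρ Set.univ).toReal :=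
        norm_integral_le_of_norm_le_const (ae_of_all _ hb)
    _ = 1 * dist f g := by simp [mul_comm]

lemma map_rot_eq {μ : Measure Torus} [IsProbabilityMeasure μ]
    (hchi : ∀ l : ℤ, l ≠ 0 → ∫ z, chi l z ∂μ = 0) (θ : ℝ) :
    Measure.map (rot θ) μ = μ := by
  set μ' := Measure.map (rot θ) μ with hμ'
  haveI : IsProbabilityMeasure μ' :=
    Measure.isProbabilityMeasure_map (measurable_rot θ).aemeasurable
  have hchi' : ∀ l : ℤ, ∫ z, chi l z ∂μ' = ∫ z, chi l z ∂μ := by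
    intro l
    by_cases hl : l = 0
    · subst hl
      rw [chi_zero_eq]
      simp only [ContinuousMap.one_apply]
      simp
    · rw [hμ', integral_chi_map, hchi l hl, mul_zero]
  have hT : ∀ f : C(Torus, ℂ), ∫ x, f x ∂μ' = ∫ x, f x ∂μ := by
    intro f
    set T : Set C(Torus, ℂ) := {g | ∫ x, g x ∂μ' = ∫ x, g x ∂μ} with hTdef
    have hTclosed : IsClosed T :=
      isClosed_eq (continuous_integral_CM μ') (continuous_integral_CM μ)
    have hWT : (W : Set C(Torus, ℂ)) ⊆ T := by
      intro g hg
      induction hg using Submodule.span_induction with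
      | mem g hgm =>
          obtain ⟨l, rfl⟩ := hgm
          exact hchi' l
      | zero => show ∫ x, (0:C(Torus,ℂ)) x ∂μ' = ∫ x, (0:C(Torus,ℂ)) x ∂μ; simp
      | add f g _ _ hf hg =>
          show ∫ x, (f + g) x ∂μ' = ∫ x, (f + g) x ∂μ
          simp only [ContinuousMap.add_apply]
          rw [integral_add (integrable_of_continuous f.continuous μ')
              (integrable_of_continuous g.continuous μ'),
            integral_add (integrable_of_continuous f.continuous μ)
              (integrable_of_continuous g.continuous μ), hf, hg]
      | smul c f _ hf =>
          show ∫ x, (c • f) x ∂μ' = ∫ x, (c • f) x ∂μ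
          simp only [ContinuousMap.smul_apply]
          rw [integral_smul, integral_smul, hf]
    exact hTclosed.closure_subset_iff.mpr hWT W_dense
  apply ext_of_forall_lintegral_eq_of_IsFiniteMeasure
  intro f
  have hfr : Continuous (fun x : Torus => (f x : ℝ)) :=
    NNReal.continuous_coe.comp f.continuous
  have hint' : Integrable (fun x : Torus => (f x : ℝ)) μ' := integrable_of_continuous hfr μ'
  have hint : Integrable (fun x : Torus => (f x : ℝ)) μ := integrable_of_continuous hfr μ
  rw [lintegral_coe_eq_integral _ hint', lintegral_coe_eq_integral _ hint]
  congr 1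
  have hthis := hT ⟨fun x => ((f x : ℝ) : ℂ), Complex.continuous_ofReal.comp hfr⟩
  simp only [ContinuousMap.coe_mk] at hthis
  have e : ∀ (ρ : Measure Torus) [IsProbabilityMeasure ρ],
      ∫ x, (f x : ℝ) ∂ρ = (∫ x, ((f x : ℝ) : ℂ) ∂ρ).re := by
    intro ρ _
    have h3 := integral_re (integrable_of_continuous (Complex.continuous_ofReal.comp hfr) ρ)
    have h4 : ∫ x, (f x : ℝ) ∂ρ = (∫ x, ((f x : ℝ) : ℂ) ∂ρ).re := by
      simpa using h3
    exact h4
  rw [e μ', e μ, hthis]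

/-- `⋂_{n=1}^∞ closure(conv{R̂_k(μ) : k ≥ n, μ ∈ M(𝕋)}) = {m}`, where `m`, the normalised
Haar (Lebesgue) measure on `𝕋`, is characterised as the unique rotation-invariant Borel
probability measure on `𝕋`. -/
theorem stmt19 :
    (⋂ (n : ℕ) (_ : 1 ≤ n),
        tvClosure (convComb
          {x : Measure Torus | ∃ k : ℕ, n ≤ k ∧
            ∃ μ : Measure Torus, IsProbabilityMeasure μ ∧ x = Rhat k μ}))
      = {m : Measure Torus | IsProbabilityMeasure m ∧
          ∀ θ : ℝ, Measure.map (rot θ) m = m} := by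
  ext x
  simp only [Set.mem_iInter, Set.mem_setOf_eq]
  constructor
  · intro hx
    have hx' : ∀ n : ℕ, 1 ≤ n → ∀ ε : ℝ≥0∞, 0 < ε →
        ∃ ν, (IsProbabilityMeasure ν ∧
          ∀ l : ℤ, l ≠ 0 → l.natAbs < n → ∫ z, chi l z ∂ν = 0)
          ∧ tvDist x ν < ε := by
      intro n hn ε hε
      obtain ⟨ν, hνS, hνd⟩ := hx n hn ε hε
      exact ⟨ν, convComb_facts hn hνS, hνd⟩
    have key : ∀ ε : ℝ≥0∞, 0 < ε → x Set.univ ≤ 1 + ε ∧ 1 ≤ x Set.univ + ε := by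
      intro ε hε
      obtain ⟨ν, ⟨hνp, _⟩, hd⟩ := hx' 1 le_rfl ε hε
      haveI := hνp
      have h := measure_le_of_tvDist hd MeasurableSet.univ
      rwa [show ν Set.univ = 1 from measure_univ] at h
    have hprob : IsProbabilityMeasure x := by
      constructor
      apply le_antisymm
      · apply ENNReal.le_of_forall_pos_le_add
        intro ε hε _
        exact (key ε (by exact_mod_cast hε)).1
      · apply ENNReal.le_of_forall_pos_le_add
        intro ε hε _
        exact (key ε (by exact_mod_cast hε)).2
    haveI := hprob
    have hchi : ∀ l : ℤ, l ≠ 0 → ∫ z, chi l z ∂x = 0 := by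
      intro l hl
      have hb : ∀ δ : ℝ, 0 < δ → ‖∫ z, chi l z ∂x‖ ≤ 4 * δ := by
        intro δ hδ
        have hε : 0 < ENNReal.ofReal δ := ENNReal.ofReal_pos.mpr hδ
        obtain ⟨ν, ⟨hνp, hν0⟩, hd⟩ := hx' (l.natAbs + 1) (by omega) _ hε
        haveI := hνp
        have h0 : ∫ z, chi l z ∂ν = 0 := hν0 l hl (by omega)
        have hcomp : ∀ A : Set Torus, MeasurableSet A →
            x A ≤ ν A + ENNReal.ofReal δ ∧ ν A ≤ x A + ENNReal.ofReal δ :=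
          fun A hA => measure_le_of_tvDist hd hA
        have hle := norm_integral_chi_sub_le (μ := x) (ν := ν)
          ENNReal.ofReal_ne_top hcomp l
        rw [h0, sub_zero] at hle
        calc ‖∫ z, chi l z ∂x‖ ≤ 4 * (ENNReal.ofReal δ).toReal := hle
          _ ≤ 4 * δ := by rw [ENNReal.toReal_ofReal hδ.le]
      have hn0 : ‖∫ z, chi l z ∂x‖ ≤ 0 := by
        by_contra hc
        push_neg at hc
        have := hb (‖∫ z, chi l z ∂x‖ / 8) (by linarith)
        linarith
      have := le_antisymm hn0 (norm_nonneg _)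
      simpa using this
    exact ⟨hprob, fun θ => map_rot_eq hchi θ⟩
  · rintro ⟨hm, hinv⟩ n hn
    haveI := hm
    intro ε hε
    have hR : Rhat n x = x := by
      rw [Rhat]
      have hc : ∀ j ∈ Finset.range n, rhat (2 * Real.pi * j / n) x = x := fun j _ => hinv _
      rw [Finset.sum_congr rfl hc, Finset.sum_const, Finset.card_range,
        ← Nat.cast_smul_eq_nsmul ℝ≥0∞, smul_smul, ENNReal.inv_mul_cancel, one_smul]
      · exact_mod_cast (by omega : n ≠ 0)
      · simp
    refine ⟨x, ⟨1, fun _ => 1, fun _ => x, by simp, fun _ => ⟨n, le_rfl, x, hm, hR.symm⟩,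
      by rw [Fin.sum_univ_one, one_smul]⟩, ?_⟩
    have h0 : tvDist x x = 0 := by
      apply le_antisymm _ zero_le
      apply iSup_le
      intro A
      apply iSup_le
      intro _
      simp [tsub_self]
    rw [h0]
    exact hε

end Stmt19
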